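/- Let $\Gamma$ be a $(Y,Y')$-distance-biregular graph with $k' \ge 3$, $D \ge 3$. For $x \in Y$, $y \in \Gamma_2(x)$, $w \in \Gamma_1(x)\cap\Gamma_1(y)$, and even $i$ with $2 \le i \le \min\{D-1,D'-1\}$, $|\Gamma_i(x)\cap\Gamma_i(y)\cap\Gamma_{i-1}(w)| = \frac{c_i k_i (b_{i-1}-1)}{b_0 b_1}$, where $k_i = |\Gamma_i(x)|$ and $b_j, c_j$ are the intersection numbers of the color class $Y$. -/
import Mathlib


open SimpleGraph Set

/-- A `(Y,Y')`-distance-biregular graph: a finite connected bipartite graph in which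
every vertex is distance-regularized, and vertices in the same color class share the
same intersection numbers (`c`, `b` for class `Y` and `c'`, `b'` for class `Y'`),
while the two color classes have different intersection arrays.
`D` (resp. `D'`) is the common eccentricity of vertices in `Y` (resp. `Y'`). -/
structure DBRG (V : Type) [Fintype V] where
  G : SimpleGraph V
  conn : G.Connected
  Y : Finset V
  Y' : Finset V
  Yne : Y.Nonempty
  Y'ne : Y'.Nonempty
  cover : ∀ v, v ∈ Y ∨ v ∈ Y'
  disj : ∀ v, ¬(v ∈ Y ∧ v ∈ Y')
  bip : ∀ u v, G.Adj u v → (u ∈ Y ↔ v ∈ Y')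
  D : ℕ
  D' : ℕ
  eccY : ∀ x ∈ Y, (∃ y, G.dist x y = D) ∧ ∀ y, G.dist x y ≤ D
  eccY' : ∀ x ∈ Y', (∃ y, G.dist x y = D') ∧ ∀ y, G.dist x y ≤ D'
  c : ℕ → ℕ
  b : ℕ → ℕ
  c' : ℕ → ℕ
  b' : ℕ → ℕ
  hc : ∀ i, 1 ≤ i → ∀ x ∈ Y, ∀ z, G.dist x z = i →
    {w | G.Adj z w ∧ G.dist x w = i - 1}.ncard = c i
  hb : ∀ i, ∀ x ∈ Y, ∀ z, G.dist x z = i →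
    {w | G.Adj z w ∧ G.dist x w = i + 1}.ncard = b i
  hc' : ∀ i, 1 ≤ i → ∀ x ∈ Y', ∀ z, G.dist x z = i →
    {w | G.Adj z w ∧ G.dist x w = i - 1}.ncard = c' i
  hb' : ∀ i, ∀ x ∈ Y', ∀ z, G.dist x z = i →
    {w | G.Adj z w ∧ G.dist x w = i + 1}.ncard = b' i
  c0 : c 0 = 0
  c'0 : c' 0 = 0
  nonreg : ¬ (∀ i, c i = c' i ∧ b i = b' i)

section Basic
variable {V : Type} [Fintype V] {G : SimpleGraph V}

lemma ncard_eq_filter_card (P : V → Prop) [DecidablePred P] :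
    {x | P x}.ncard = (Finset.univ.filter P).card := by
  simp [Set.ncard_eq_toFinset_card', Set.toFinset_setOf]

lemma double_count_finset {α : Type} [Fintype α] (A B : Finset α) (R : α → α → Prop)
    [DecidableRel R]
    (p q : ℕ) (hA : ∀ a ∈ A, (B.filter (fun b => R a b)).card = p)
    (hB : ∀ b ∈ B, (A.filter (fun a => R a b)).card = q) :
    A.card * p = B.card * q := by
  classical
  have key : ∑ a ∈ A, (B.filter (fun b => R a b)).card
      = ∑ b ∈ B, (A.filter (fun a => R a b)).card := by
    simp only [Finset.card_filter]
    rw [Finset.sum_comm]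
  calc A.card * p = ∑ _a ∈ A, p := by rw [Finset.sum_const, smul_eq_mul, mul_comm]
    _ = ∑ a ∈ A, (B.filter (fun b => R a b)).card :=
        Finset.sum_congr rfl (fun a ha => (hA a ha).symm)
    _ = ∑ b ∈ B, (A.filter (fun a => R a b)).card := key
    _ = ∑ _b ∈ B, q := Finset.sum_congr rfl hB
    _ = B.card * q := by rw [Finset.sum_const, smul_eq_mul, mul_comm]

lemma double_count_set (A B : Set V) (R : V → V → Prop) (p q : ℕ)
    (hA : ∀ a ∈ A, {b | b ∈ B ∧ R a b}.ncard = p)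
    (hB : ∀ b ∈ B, {a | a ∈ A ∧ R a b}.ncard = q) :
    A.ncard * p = B.ncard * q := by
  classical
  have eA : A.ncard = (Finset.univ.filter (fun v => v ∈ A)).card := by
    rw [← ncard_eq_filter_card]; simp
  have eB : B.ncard = (Finset.univ.filter (fun v => v ∈ B)).card := by
    rw [← ncard_eq_filter_card]; simp
  rw [eA, eB]
  apply double_count_finset _ _ R
  · intro a ha
    rw [← hA a (by simpa using ha), ncard_eq_filter_card]
    congr 1
    ext v
    simp
  · intro b hb
    rw [← hB b (by simpa using hb), ncard_eq_filter_card]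
    congr 1
    ext v
    simp [and_comm]

omit [Fintype V] in
lemma dist_le_succ_of_adj (hconn : G.Connected) (x : V) {u v : V} (h : G.Adj u v) :
    G.dist x v ≤ G.dist x u + 1 := by
  have t := hconn.dist_triangle (u := x) (v := u) (w := v)
  rwa [(SimpleGraph.dist_eq_one_iff_adj).mpr h] at t

omit [Fintype V] in
lemma exists_pred (hconn : G.Connected) {x u : V} {j : ℕ} (h : G.dist x u = j + 1) :
    ∃ v, G.Adj u v ∧ G.dist x v = j := by
  obtain ⟨p, hp⟩ := hconn.exists_walk_length_eq_dist x u
  have hq : (p.reverse).length = j + 1 := by rw [Walk.length_reverse, hp, h]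
  cases hr : p.reverse with
  | nil => rw [hr] at hq; simp at hq
  | cons hadj q =>
    rw [hr] at hq
    simp only [Walk.length_cons] at hq
    refine ⟨_, hadj, le_antisymm ?_ ?_⟩
    · calc G.dist x _ = G.dist _ x := SimpleGraph.dist_comm
        _ ≤ q.length := SimpleGraph.dist_le q
        _ = j := by omega
    · have h2 := dist_le_succ_of_adj hconn x hadj.symm
      omega

end Basic

namespace DBRG
variable {V : Type} [Fintype V] (Γ : DBRG V)

lemma mem_Y'_iff (v : V) : v ∈ Γ.Y' ↔ ¬ v ∈ Γ.Y :=
  ⟨fun hv hvy => Γ.disj v ⟨hvy, hv⟩, fun hv => (Γ.cover v).resolve_left hv⟩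

lemma walk_parity {x u : V} (p : Γ.G.Walk x u) :
    ((x ∈ Γ.Y ↔ u ∈ Γ.Y) ↔ Even p.length) := by
  induction p with
  | nil => simp
  | cons h q ih =>
    have hb := Γ.bip _ _ h
    rw [Γ.mem_Y'_iff] at hb
    simp only [Walk.length_cons, Nat.even_add_one, ← ih]
    tauto

lemma dist_parity (x u : V) (hx : x ∈ Γ.Y) :
    (u ∈ Γ.Y ↔ Even (Γ.G.dist x u)) := by
  obtain ⟨p, hp⟩ := Γ.conn.exists_walk_length_eq_dist x u
  have hpar := Γ.walk_parity p
  rw [hp] at hpar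
  tauto

lemma dist_parity' (x u : V) (hx : x ∈ Γ.Y) :
    (u ∈ Γ.Y' ↔ ¬ Even (Γ.G.dist x u)) := by
  rw [Γ.mem_Y'_iff, Γ.dist_parity x u hx]


lemma exists_dist_le {x u : V} {j : ℕ} (h : Γ.G.dist x u = j) :
    ∀ t ≤ j, ∃ v, Γ.G.dist x v = t := by
  induction j generalizing u with
  | zero => intro t ht; exact ⟨u, by omega⟩
  | succ n ih =>
    intro t ht
    obtain ⟨v, _, hv⟩ := exists_pred Γ.conn h
    rcases Nat.lt_or_ge t (n+1) with h1 | h1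
    · exact ih hv t (by omega)
    · exact ⟨u, by omega⟩

lemma exists_distY (x : V) (hx : x ∈ Γ.Y) {t : ℕ} (ht : t ≤ Γ.D) :
    ∃ v, Γ.G.dist x v = t := by
  obtain ⟨⟨z, hz⟩, -⟩ := Γ.eccY x hx
  exact Γ.exists_dist_le hz t ht

lemma c_pos (x : V) (hx : x ∈ Γ.Y) {j : ℕ} (h1 : 1 ≤ j) (h2 : j ≤ Γ.D) :
    0 < Γ.c j := by
  obtain ⟨j', rfl⟩ : ∃ j', j = j' + 1 := ⟨j - 1, by omega⟩
  obtain ⟨z, hz⟩ := Γ.exists_distY x hx h2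
  obtain ⟨v, hv1, hv2⟩ := exists_pred Γ.conn hz
  rw [← Γ.hc (j'+1) h1 x hx z hz]
  rw [Set.ncard_pos (Set.toFinite _)]
  exact ⟨v, hv1, by simpa using hv2⟩

lemma b_pos (x : V) (hx : x ∈ Γ.Y) {j : ℕ} (h2 : j + 1 ≤ Γ.D) :
    0 < Γ.b j := by
  obtain ⟨z, hz⟩ := Γ.exists_distY x hx h2
  obtain ⟨v, hv1, hv2⟩ := exists_pred Γ.conn hz
  rw [← Γ.hb j x hx v hv2]
  rw [Set.ncard_pos (Set.toFinite _)]
  exact ⟨z, hv1.symm, hz⟩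

lemma exists_distY' (w : V) (hw : w ∈ Γ.Y') {t : ℕ} (ht : t ≤ Γ.D') :
    ∃ v, Γ.G.dist w v = t := by
  obtain ⟨⟨z, hz⟩, -⟩ := Γ.eccY' w hw
  exact Γ.exists_dist_le hz t ht

lemma c'_pos (w : V) (hw : w ∈ Γ.Y') {j : ℕ} (h1 : 1 ≤ j) (h2 : j ≤ Γ.D') :
    0 < Γ.c' j := by
  obtain ⟨j', rfl⟩ : ∃ j', j = j' + 1 := ⟨j - 1, by omega⟩
  obtain ⟨z, hz⟩ := Γ.exists_distY' w hw h2
  obtain ⟨v, hv1, hv2⟩ := exists_pred Γ.conn hz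
  rw [← Γ.hc' (j'+1) h1 w hw z hz]
  rw [Set.ncard_pos (Set.toFinite _)]
  exact ⟨v, hv1, by simpa using hv2⟩

lemma degY' (z : V) (hz : z ∈ Γ.Y') : {v | Γ.G.Adj z v}.ncard = Γ.b' 0 := by
  rw [← Γ.hb' 0 z hz z (SimpleGraph.dist_self)]
  congr 1
  ext v
  simp only [Set.mem_setOf_eq, zero_add]
  exact ⟨fun h => ⟨h, SimpleGraph.dist_eq_one_iff_adj.mpr h⟩, fun h => h.1⟩

lemma deg_split (x : V) (hx : x ∈ Γ.Y) {j : ℕ} (h1 : 1 ≤ j) (hodd : ¬ Even j)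
    (z : V) (hz : Γ.G.dist x z = j) :
    {v | Γ.G.Adj z v}.ncard = Γ.c j + Γ.b j := by
  have hzY' : z ∈ Γ.Y' := by
    rw [Γ.dist_parity' x z hx, hz]; exact hodd
  have hsplit : {v | Γ.G.Adj z v}
      = {v | Γ.G.Adj z v ∧ Γ.G.dist x v = j - 1} ∪ {v | Γ.G.Adj z v ∧ Γ.G.dist x v = j + 1} := by
    ext v
    simp only [Set.mem_setOf_eq, Set.mem_union]
    constructor
    · intro hadj
      have hub : Γ.G.dist x v ≤ j + 1 := by
        have := dist_le_succ_of_adj Γ.conn x hadj; omega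
      have hlb : j ≤ Γ.G.dist x v + 1 := by
        have := dist_le_succ_of_adj Γ.conn x hadj.symm; omega
      have hvY : v ∈ Γ.Y := by
        by_contra hvY
        have hvY' : v ∈ Γ.Y' := (Γ.cover v).resolve_left hvY
        exact (Γ.mem_Y'_iff z).mp hzY' ((Γ.bip z v hadj).mpr hvY')
      have hev : Even (Γ.G.dist x v) := (Γ.dist_parity x v hx).mp hvY
      obtain ⟨a, ha⟩ := hev
      rcases Nat.even_or_odd j with hje | hjo
      · exact absurd hje hodd
      · obtain ⟨bb, hbb⟩ := hjo
        rcases Nat.lt_or_ge (Γ.G.dist x v) j with hlt | hge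
        · left; exact ⟨hadj, by omega⟩
        · right; exact ⟨hadj, by omega⟩
    · rintro (⟨h, -⟩ | ⟨h, -⟩) <;> exact h
  rw [hsplit, Set.ncard_union_eq ?disj (Set.toFinite _) (Set.toFinite _),
    Γ.hc j h1 x hx z hz, Γ.hb j x hx z hz]
  case disj =>
    rw [Set.disjoint_left]
    rintro v ⟨-, h1'⟩ ⟨-, h2'⟩
    omega


lemma K_step (x : V) (hx : x ∈ Γ.Y) (m : ℕ) :
    {v | Γ.G.dist x v = m + 1}.ncard * Γ.c (m+1)
      = {v | Γ.G.dist x v = m}.ncard * Γ.b m := by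
  apply double_count_set _ _ (fun a bb => Γ.G.Adj a bb)
  · intro a ha
    simp only [Set.mem_setOf_eq] at ha
    rw [← Γ.hc (m+1) (by omega) x hx a ha]
    congr 1; ext v
    simp only [Set.mem_setOf_eq, Nat.add_sub_cancel]
    exact ⟨fun ⟨hd, hadj⟩ => ⟨hadj, hd⟩, fun ⟨hadj, hd⟩ => ⟨hd, hadj⟩⟩
  · intro bb hbb
    simp only [Set.mem_setOf_eq] at hbb
    rw [← Γ.hb m x hx bb hbb]
    congr 1; ext v
    simp only [Set.mem_setOf_eq]
    exact ⟨fun ⟨hd, hadj⟩ => ⟨hadj.symm, hd⟩, fun ⟨hadj, hd⟩ => ⟨hd, hadj.symm⟩⟩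

lemma K_prod (x : V) (hx : x ∈ Γ.Y) (m : ℕ) :
    {v | Γ.G.dist x v = m}.ncard * ∏ t ∈ Finset.range m, Γ.c (t+1)
      = ∏ t ∈ Finset.range m, Γ.b t := by
  induction m with
  | zero =>
    simp only [Finset.range_zero, Finset.prod_empty, mul_one]
    have hs : {v | Γ.G.dist x v = 0} = {x} := by
      ext v
      simp only [Set.mem_setOf_eq, Set.mem_singleton_iff, Γ.conn.dist_eq_zero_iff]
      exact ⟨fun h => h.symm, fun h => h.symm⟩
    rw [hs, Set.ncard_singleton]
  | succ n ih =>
    rw [Finset.prod_range_succ, Finset.prod_range_succ]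
    calc {v | Γ.G.dist x v = n + 1}.ncard * ((∏ t ∈ Finset.range n, Γ.c (t+1)) * Γ.c (n+1))
        = ({v | Γ.G.dist x v = n + 1}.ncard * Γ.c (n+1)) * ∏ t ∈ Finset.range n, Γ.c (t+1) := by
          ring
      _ = ({v | Γ.G.dist x v = n}.ncard * Γ.b n) * ∏ t ∈ Finset.range n, Γ.c (t+1) := by
          rw [Γ.K_step x hx n]
      _ = ({v | Γ.G.dist x v = n}.ncard * ∏ t ∈ Finset.range n, Γ.c (t+1)) * Γ.b n := by ring
      _ = (∏ t ∈ Finset.range n, Γ.b t) * Γ.b n := by rw [ih]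

lemma S_step (x w : V) (hx : x ∈ Γ.Y) (hw : Γ.G.Adj x w) (m : ℕ) :
    {v | Γ.G.dist x v = m + 2 ∧ Γ.G.dist w v = m + 1}.ncard * Γ.c' (m+1)
      = {v | Γ.G.dist x v = m + 1 ∧ Γ.G.dist w v = m}.ncard * Γ.b (m+1) := by
  have hwY' : w ∈ Γ.Y' := (Γ.bip x w hw).mp hx
  have hxw : Γ.G.dist x w = 1 := SimpleGraph.dist_eq_one_iff_adj.mpr hw
  apply double_count_set _ _ (fun a bb => Γ.G.Adj a bb)
  · intro a ha
    simp only [Set.mem_setOf_eq] at ha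
    rw [← Γ.hc' (m+1) (by omega) w hwY' a ha.2]
    congr 1; ext v
    simp only [Set.mem_setOf_eq, Nat.add_sub_cancel]
    constructor
    · rintro ⟨⟨-, hd2⟩, hadj⟩; exact ⟨hadj, hd2⟩
    · rintro ⟨hadj, hd2⟩
      refine ⟨⟨le_antisymm ?_ ?_, hd2⟩, hadj⟩
      · have := Γ.conn.dist_triangle (u := x) (v := w) (w := v); omega
      · have := dist_le_succ_of_adj Γ.conn x hadj.symm; omega
  · intro bb hbb
    simp only [Set.mem_setOf_eq] at hbb
    rw [← Γ.hb (m+1) x hx bb hbb.1]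
    congr 1; ext v
    simp only [Set.mem_setOf_eq]
    constructor
    · rintro ⟨⟨hd1, -⟩, hadj⟩; exact ⟨hadj.symm, hd1⟩
    · rintro ⟨hadj, hd1⟩
      refine ⟨⟨hd1, le_antisymm ?_ ?_⟩, hadj.symm⟩
      · have := dist_le_succ_of_adj Γ.conn w hadj; omega
      · have := Γ.conn.dist_triangle (u := x) (v := w) (w := v); omega

lemma S_prod (x w : V) (hx : x ∈ Γ.Y) (hw : Γ.G.Adj x w) (m : ℕ) :
    {v | Γ.G.dist x v = m + 1 ∧ Γ.G.dist w v = m}.ncard * ∏ t ∈ Finset.range m, Γ.c' (t+1)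
      = ∏ t ∈ Finset.range m, Γ.b (t+1) := by
  induction m with
  | zero =>
    simp only [Finset.range_zero, Finset.prod_empty, mul_one]
    have hs : {v | Γ.G.dist x v = 1 ∧ Γ.G.dist w v = 0} = {w} := by
      ext v
      simp only [Set.mem_setOf_eq, Set.mem_singleton_iff, Γ.conn.dist_eq_zero_iff]
      constructor
      · rintro ⟨-, h⟩; exact h.symm
      · rintro rfl; exact ⟨SimpleGraph.dist_eq_one_iff_adj.mpr hw, rfl⟩
    rw [hs, Set.ncard_singleton]
  | succ n ih =>
    rw [Finset.prod_range_succ, Finset.prod_range_succ]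
    calc {v | Γ.G.dist x v = n + 2 ∧ Γ.G.dist w v = n + 1}.ncard
          * ((∏ t ∈ Finset.range n, Γ.c' (t+1)) * Γ.c' (n+1))
        = ({v | Γ.G.dist x v = n + 2 ∧ Γ.G.dist w v = n + 1}.ncard * Γ.c' (n+1))
            * ∏ t ∈ Finset.range n, Γ.c' (t+1) := by ring
      _ = ({v | Γ.G.dist x v = n + 1 ∧ Γ.G.dist w v = n}.ncard * Γ.b (n+1))
            * ∏ t ∈ Finset.range n, Γ.c' (t+1) := by rw [Γ.S_step x w hx hw n]
      _ = ({v | Γ.G.dist x v = n + 1 ∧ Γ.G.dist w v = n}.ncard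
            * ∏ t ∈ Finset.range n, Γ.c' (t+1)) * Γ.b (n+1) := by ring
      _ = (∏ t ∈ Finset.range n, Γ.b (t+1)) * Γ.b (n+1) := by rw [ih]

lemma R_step (x y : V) (hx : x ∈ Γ.Y) (hy : Γ.G.dist x y = 2) (m : ℕ) :
    {v | Γ.G.dist x v = m + 3 ∧ Γ.G.dist y v = m + 1}.ncard * Γ.c (m+1)
      = {v | Γ.G.dist x v = m + 2 ∧ Γ.G.dist y v = m}.ncard * Γ.b (m+2) := by
  have hyY : y ∈ Γ.Y := by rw [Γ.dist_parity x y hx, hy]; exact even_two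
  apply double_count_set _ _ (fun a bb => Γ.G.Adj a bb)
  · intro a ha
    simp only [Set.mem_setOf_eq] at ha
    rw [← Γ.hc (m+1) (by omega) y hyY a ha.2]
    congr 1; ext v
    simp only [Set.mem_setOf_eq, Nat.add_sub_cancel]
    constructor
    · rintro ⟨⟨-, hd2⟩, hadj⟩; exact ⟨hadj, hd2⟩
    · rintro ⟨hadj, hd2⟩
      refine ⟨⟨le_antisymm ?_ ?_, hd2⟩, hadj⟩
      · have := Γ.conn.dist_triangle (u := x) (v := y) (w := v); omega
      · have := dist_le_succ_of_adj Γ.conn x hadj.symm; omega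
  · intro bb hbb
    simp only [Set.mem_setOf_eq] at hbb
    rw [← Γ.hb (m+2) x hx bb hbb.1]
    congr 1; ext v
    simp only [Set.mem_setOf_eq]
    constructor
    · rintro ⟨⟨hd1, -⟩, hadj⟩; exact ⟨hadj.symm, hd1⟩
    · rintro ⟨hadj, hd1⟩
      refine ⟨⟨hd1, le_antisymm ?_ ?_⟩, hadj.symm⟩
      · have := dist_le_succ_of_adj Γ.conn y hadj; omega
      · have := Γ.conn.dist_triangle (u := x) (v := y) (w := v); omega

lemma R_prod (x y : V) (hx : x ∈ Γ.Y) (hy : Γ.G.dist x y = 2) (m : ℕ) :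
    {v | Γ.G.dist x v = m + 2 ∧ Γ.G.dist y v = m}.ncard * ∏ t ∈ Finset.range m, Γ.c (t+1)
      = ∏ t ∈ Finset.range m, Γ.b (t+2) := by
  induction m with
  | zero =>
    simp only [Finset.range_zero, Finset.prod_empty, mul_one]
    have hs : {v | Γ.G.dist x v = 2 ∧ Γ.G.dist y v = 0} = {y} := by
      ext v
      simp only [Set.mem_setOf_eq, Set.mem_singleton_iff, Γ.conn.dist_eq_zero_iff]
      constructor
      · rintro ⟨-, h⟩; exact h.symm
      · rintro rfl; exact ⟨hy, rfl⟩
    rw [hs, Set.ncard_singleton]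
  | succ n ih =>
    rw [Finset.prod_range_succ, Finset.prod_range_succ]
    calc {v | Γ.G.dist x v = n + 3 ∧ Γ.G.dist y v = n + 1}.ncard
          * ((∏ t ∈ Finset.range n, Γ.c (t+1)) * Γ.c (n+1))
        = ({v | Γ.G.dist x v = n + 3 ∧ Γ.G.dist y v = n + 1}.ncard * Γ.c (n+1))
            * ∏ t ∈ Finset.range n, Γ.c (t+1) := by ring
      _ = ({v | Γ.G.dist x v = n + 2 ∧ Γ.G.dist y v = n}.ncard * Γ.b (n+2))
            * ∏ t ∈ Finset.range n, Γ.c (t+1) := by rw [Γ.R_step x y hx hy n]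
      _ = ({v | Γ.G.dist x v = n + 2 ∧ Γ.G.dist y v = n}.ncard
            * ∏ t ∈ Finset.range n, Γ.c (t+1)) * Γ.b (n+2) := by ring
      _ = (∏ t ∈ Finset.range n, Γ.b (t+2)) * Γ.b (n+2) := by rw [ih]

lemma M_step (x u : V) (hx : x ∈ Γ.Y) (hu : u ∈ Γ.Y') (m e : ℕ)
    (hd : Γ.G.dist x u = m + 1 + e) :
    {v | Γ.G.dist x v = m + 1 ∧ Γ.G.dist u v = e}.ncard * Γ.c (m+1)
      = {v | Γ.G.dist x v = m ∧ Γ.G.dist u v = e + 1}.ncard * Γ.c' (e+1) := by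
  apply double_count_set _ _ (fun a bb => Γ.G.Adj a bb)
  · intro a ha
    simp only [Set.mem_setOf_eq] at ha
    rw [← Γ.hc (m+1) (by omega) x hx a ha.1]
    congr 1; ext v
    simp only [Set.mem_setOf_eq, Nat.add_sub_cancel]
    constructor
    · rintro ⟨⟨hd1, -⟩, hadj⟩; exact ⟨hadj, hd1⟩
    · rintro ⟨hadj, hd1⟩
      refine ⟨⟨hd1, le_antisymm ?_ ?_⟩, hadj⟩
      · have := dist_le_succ_of_adj Γ.conn u hadj; omega
      · have h1 := Γ.conn.dist_triangle (u := x) (v := v) (w := u)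
        have h2 : Γ.G.dist v u = Γ.G.dist u v := SimpleGraph.dist_comm
        omega
  · intro bb hbb
    simp only [Set.mem_setOf_eq] at hbb
    rw [← Γ.hc' (e+1) (by omega) u hu bb hbb.2]
    congr 1; ext v
    simp only [Set.mem_setOf_eq, Nat.add_sub_cancel]
    constructor
    · rintro ⟨⟨-, hd2⟩, hadj⟩; exact ⟨hadj.symm, hd2⟩
    · rintro ⟨hadj, hd2⟩
      refine ⟨⟨le_antisymm ?_ ?_, hd2⟩, hadj.symm⟩
      · have := dist_le_succ_of_adj Γ.conn x hadj; omega
      · have h1 := Γ.conn.dist_triangle (u := x) (v := v) (w := u)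
        have h2 : Γ.G.dist v u = Γ.G.dist u v := SimpleGraph.dist_comm
        omega

lemma M_prod (x u : V) (hx : x ∈ Γ.Y) (hu : u ∈ Γ.Y') (m : ℕ) :
    ∀ e, Γ.G.dist x u = m + e →
      {v | Γ.G.dist x v = m ∧ Γ.G.dist u v = e}.ncard * ∏ t ∈ Finset.range m, Γ.c (t+1)
        = ∏ t ∈ Finset.range m, Γ.c' (e + 1 + t) := by
  induction m with
  | zero =>
    intro e he
    simp only [Finset.range_zero, Finset.prod_empty, mul_one]
    have hs : {v | Γ.G.dist x v = 0 ∧ Γ.G.dist u v = e} = {x} := by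
      ext v
      simp only [Set.mem_setOf_eq, Set.mem_singleton_iff, Γ.conn.dist_eq_zero_iff]
      constructor
      · rintro ⟨h, -⟩; exact h.symm
      · rintro rfl
        refine ⟨rfl, ?_⟩
        rw [SimpleGraph.dist_comm]
        omega
    rw [hs, Set.ncard_singleton]
  | succ n ih =>
    intro e he
    have ih' := ih (e+1) (by omega)
    rw [Finset.prod_range_succ]
    have hrhs : ∏ t ∈ Finset.range (n+1), Γ.c' (e + 1 + t)
        = (∏ t ∈ Finset.range n, Γ.c' (e + 1 + 1 + t)) * Γ.c' (e+1) := by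
      rw [Finset.prod_range_succ']
      exact congrArg (· * Γ.c' (e+1)) (Finset.prod_congr rfl fun t _ => by congr 1; omega)
    rw [hrhs]
    calc {v | Γ.G.dist x v = n + 1 ∧ Γ.G.dist u v = e}.ncard
          * ((∏ t ∈ Finset.range n, Γ.c (t+1)) * Γ.c (n+1))
        = ({v | Γ.G.dist x v = n + 1 ∧ Γ.G.dist u v = e}.ncard * Γ.c (n+1))
            * ∏ t ∈ Finset.range n, Γ.c (t+1) := by ring
      _ = ({v | Γ.G.dist x v = n ∧ Γ.G.dist u v = e + 1}.ncard * Γ.c' (e+1))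
            * ∏ t ∈ Finset.range n, Γ.c (t+1) := by rw [Γ.M_step x u hx hu n e he]
      _ = ({v | Γ.G.dist x v = n ∧ Γ.G.dist u v = e + 1}.ncard
            * ∏ t ∈ Finset.range n, Γ.c (t+1)) * Γ.c' (e+1) := by ring
      _ = (∏ t ∈ Finset.range n, Γ.c' (e + 1 + 1 + t)) * Γ.c' (e+1) := by
          rw [ih']

lemma cprod_eq (x : V) (hx : x ∈ Γ.Y) {s : ℕ} (hs1 : 1 ≤ s) (hodd : ¬ Even s)
    (hsD : s ≤ Γ.D) :
    ∏ t ∈ Finset.range s, Γ.c (t+1) = ∏ t ∈ Finset.range s, Γ.c' (t+1) := by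
  obtain ⟨u, hu⟩ := Γ.exists_distY x hx hsD
  have huY' : u ∈ Γ.Y' := by rw [Γ.dist_parity' x u hx, hu]; exact hodd
  have := Γ.M_prod x u hx huY' s 0 (by omega)
  have hsing : {v | Γ.G.dist x v = s ∧ Γ.G.dist u v = 0} = {u} := by
    ext v
    simp only [Set.mem_setOf_eq, Set.mem_singleton_iff, Γ.conn.dist_eq_zero_iff]
    constructor
    · rintro ⟨-, h⟩; exact h.symm
    · rintro rfl; exact ⟨hu, rfl⟩
  rw [hsing, Set.ncard_singleton, one_mul] at this
  rw [this]
  apply Finset.prod_congr rfl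
  intro t ht
  congr 1
  omega


end DBRG

/-- `Γ` is `2`-`Y`-homogeneous with parameters `γ i`: for all `1 ≤ i ≤ D - 1` and all
`x ∈ Y`, `y ∈ Γ₂(x)`, `z ∈ Γ_{i,i}(x,y)`, the number of common neighbours of `x` and `y`
at distance `i - 1` from `z` equals `γ i` (independently of `x`, `y`, `z`). -/
def DBRG.TwoYHom {V : Type} [Fintype V] (Γ : DBRG V) (γ : ℕ → ℕ) : Prop :=
  ∀ i, 1 ≤ i → i ≤ Γ.D - 1 → ∀ x ∈ Γ.Y, ∀ y, Γ.G.dist x y = 2 →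
    ∀ z, Γ.G.dist x z = i → Γ.G.dist y z = i →
      {w | Γ.G.dist z w = i - 1 ∧ Γ.G.Adj x w ∧ Γ.G.Adj y w}.ncard = γ i
theorem stmt_18 {V : Type} [Fintype V] (Γ : DBRG V) (hk' : 3 ≤ Γ.b' 0) (hD : 3 ≤ Γ.D)
    (i : ℕ) (hev : Even i) (hi1 : 2 ≤ i) (hi2 : i ≤ min (Γ.D - 1) (Γ.D' - 1))
    (x : V) (hx : x ∈ Γ.Y) (y : V) (hy : Γ.G.dist x y = 2)
    (w : V) (hw1 : Γ.G.Adj x w) (hw2 : Γ.G.Adj y w) :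
    ({u | Γ.G.dist x u = i ∧ Γ.G.dist y u = i ∧ Γ.G.dist w u = i - 1}.ncard : ℚ) =
      (Γ.c i : ℚ) * ({u | Γ.G.dist x u = i}.ncard : ℚ) * ((Γ.b (i - 1) : ℚ) - 1) /
        ((Γ.b 0 : ℚ) * (Γ.b 1 : ℚ)) := by
  obtain ⟨j, rfl⟩ : ∃ j, i = j + 2 := ⟨i - 2, by omega⟩
  have hevj : Even j := by rcases hev with ⟨t, ht⟩; exact ⟨t - 1, by omega⟩
  have hoddj1 : ¬ Even (j + 1) := by
    rcases hevj with ⟨t, ht⟩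
    intro ⟨a, ha⟩; omega
  obtain ⟨hiD, hiD'⟩ := le_min_iff.mp hi2
  have hDj : j + 3 ≤ Γ.D := by omega
  have hD'j : j + 3 ≤ Γ.D' := by omega
  have hwY' : w ∈ Γ.Y' := (Γ.bip x w hw1).mp hx
  have hyY : y ∈ Γ.Y := by rw [Γ.dist_parity x y hx, hy]; exact even_two
  have hxw : Γ.G.dist x w = 1 := SimpleGraph.dist_eq_one_iff_adj.mpr hw1
  have hyw : Γ.G.dist y w = 1 := SimpleGraph.dist_eq_one_iff_adj.mpr hw2
  have hwy : Γ.G.dist w y = 1 := by rw [SimpleGraph.dist_comm]; exact hyw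
  simp only [show j + 2 - 1 = j + 1 from rfl]
  -- c 1 = 1
  have hc1 : Γ.c 1 = 1 := by
    rw [← Γ.hc 1 le_rfl x hx w hxw]
    have hs : {v | Γ.G.Adj w v ∧ Γ.G.dist x v = 1 - 1} = {x} := by
      ext v
      simp only [Set.mem_setOf_eq, Set.mem_singleton_iff, Γ.conn.dist_eq_zero_iff]
      constructor
      · rintro ⟨-, h⟩; exact h.symm
      · rintro rfl; exact ⟨hw1.symm, rfl⟩
    rw [hs, Set.ncard_singleton]
  -- degree identities: c (j+1) + b (j+1) = 1 + b 1
  have n4 : Γ.c (j+1) + Γ.b (j+1) = 1 + Γ.b 1 := by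
    obtain ⟨z, hz⟩ := Γ.exists_distY x hx (show j + 1 ≤ Γ.D by omega)
    have hzY' : z ∈ Γ.Y' := by rw [Γ.dist_parity' x z hx, hz]; exact hoddj1
    have d1 := Γ.degY' w hwY'
    have d2 := Γ.deg_split x hx le_rfl (by simp) w hxw
    have d3 := Γ.degY' z hzY'
    have d4 := Γ.deg_split x hx (by omega) hoddj1 z hz
    omega
  -- product equalities
  have hcc : ∏ t ∈ Finset.range (j+1), Γ.c (t+1) = ∏ t ∈ Finset.range (j+1), Γ.c' (t+1) :=
    Γ.cprod_eq x hx (by omega) hoddj1 (by omega)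
  have pb1 : ∏ t ∈ Finset.range (j+1), Γ.b (t+1)
      = (∏ t ∈ Finset.range j, Γ.b (t+2)) * Γ.b 1 := by
    rw [Finset.prod_range_succ']
  have pb0 : ∏ t ∈ Finset.range (j+2), Γ.b t
      = (∏ t ∈ Finset.range (j+1), Γ.b (t+1)) * Γ.b 0 := by
    rw [Finset.prod_range_succ']
  have pc1 : ∏ t ∈ Finset.range (j+1), Γ.c (t+1)
      = (∏ t ∈ Finset.range j, Γ.c (t+1)) * Γ.c (j+1) := Finset.prod_range_succ _ _
  have pcI : ∏ t ∈ Finset.range (j+2), Γ.c (t+1)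
      = (∏ t ∈ Finset.range (j+1), Γ.c (t+1)) * Γ.c (j+2) := by
    rw [Finset.prod_range_succ]
  have n1 : {v | Γ.G.dist x v = j + 2 ∧ Γ.G.dist w v = j + 1}.ncard
      * ((∏ t ∈ Finset.range j, Γ.c (t+1)) * Γ.c (j+1))
      = (∏ t ∈ Finset.range j, Γ.b (t+2)) * Γ.b 1 := by
    rw [← pc1, ← pb1, hcc]
    exact Γ.S_prod x w hx hw1 (j+1)
  have n2 : {v | Γ.G.dist x v = j + 2 ∧ Γ.G.dist y v = j}.ncard
      * (∏ t ∈ Finset.range j, Γ.c (t+1))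
      = ∏ t ∈ Finset.range j, Γ.b (t+2) := Γ.R_prod x y hx hy j
  have n3 : {v | Γ.G.dist x v = j + 2}.ncard
      * (((∏ t ∈ Finset.range j, Γ.c (t+1)) * Γ.c (j+1)) * Γ.c (j+2))
      = ((∏ t ∈ Finset.range j, Γ.b (t+2)) * Γ.b 1) * Γ.b 0 := by
    rw [← pc1, ← pcI, ← pb1, ← pb0]
    exact Γ.K_prod x hx (j+2)
  -- decomposition
  have hCC' : {v | Γ.G.dist x v = j + 2 ∧ Γ.G.dist y v = j}
      = {v | Γ.G.dist x v = j + 2 ∧ Γ.G.dist y v = j ∧ Γ.G.dist w v = j + 1} := by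
    ext v
    simp only [Set.mem_setOf_eq]
    constructor
    · rintro ⟨h1, h2⟩
      refine ⟨h1, h2, le_antisymm ?_ ?_⟩
      · have := Γ.conn.dist_triangle (u := w) (v := y) (w := v); omega
      · have := Γ.conn.dist_triangle (u := x) (v := w) (w := v); omega
    · rintro ⟨h1, h2, -⟩; exact ⟨h1, h2⟩
  have hsplit : {v | Γ.G.dist x v = j + 2 ∧ Γ.G.dist w v = j + 1}
      = {v | Γ.G.dist x v = j + 2 ∧ Γ.G.dist y v = j ∧ Γ.G.dist w v = j + 1}
        ∪ {v | Γ.G.dist x v = j + 2 ∧ Γ.G.dist y v = j + 2 ∧ Γ.G.dist w v = j + 1} := by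
    ext v
    simp only [Set.mem_setOf_eq, Set.mem_union]
    constructor
    · rintro ⟨h1, h2⟩
      have hvY : v ∈ Γ.Y := by
        rw [Γ.dist_parity x v hx, h1]
        rcases hevj with ⟨t, ht⟩; exact ⟨t + 1, by omega⟩
      have hvev : Even (Γ.G.dist y v) := (Γ.dist_parity y v hyY).mp hvY
      have hub : Γ.G.dist y v ≤ j + 2 := by
        have := Γ.conn.dist_triangle (u := y) (v := w) (w := v); omega
      have hlb : j ≤ Γ.G.dist y v := by
        have := Γ.conn.dist_triangle (u := w) (v := y) (w := v); omega
      rcases hvev with ⟨a, ha⟩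
      rcases hevj with ⟨t, ht⟩
      rcases (by omega : Γ.G.dist y v = j ∨ Γ.G.dist y v = j + 2) with h | h
      · exact Or.inl ⟨h1, h, h2⟩
      · exact Or.inr ⟨h1, h, h2⟩
    · rintro (⟨h1, -, h2⟩ | ⟨h1, -, h2⟩) <;> exact ⟨h1, h2⟩
  have n5 : {v | Γ.G.dist x v = j + 2 ∧ Γ.G.dist w v = j + 1}.ncard
      = {v | Γ.G.dist x v = j + 2 ∧ Γ.G.dist y v = j}.ncard
        + {v | Γ.G.dist x v = j + 2 ∧ Γ.G.dist y v = j + 2 ∧ Γ.G.dist w v = j + 1}.ncard := by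
    rw [hsplit, hCC']
    apply Set.ncard_union_eq ?_ (Set.toFinite _) (Set.toFinite _)
    rw [Set.disjoint_left]
    rintro v ⟨-, h1, -⟩ ⟨-, h2, -⟩
    omega
  -- positivity
  have hb0 : 0 < Γ.b 0 := Γ.b_pos x hx (by omega)
  have hb1 : 0 < Γ.b 1 := Γ.b_pos x hx (by omega)
  have hcj1 : 0 < Γ.c (j+1) := Γ.c_pos x hx (by omega) (by omega)
  have hP2 : 0 < ∏ t ∈ Finset.range j, Γ.c (t+1) :=
    Finset.prod_pos fun t ht => Γ.c_pos x hx (by omega)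
      (by have := Finset.mem_range.mp ht; omega)
  have hb01 : (Γ.b 0 : ℚ) * (Γ.b 1 : ℚ) ≠ 0 :=
    mul_ne_zero (Nat.cast_ne_zero.mpr (by omega)) (Nat.cast_ne_zero.mpr (by omega))
  have hP2q : (((∏ t ∈ Finset.range j, Γ.c (t+1) : ℕ)) : ℚ) * (Γ.c (j+1) : ℚ) ≠ 0 :=
    mul_ne_zero (Nat.cast_ne_zero.mpr (by omega)) (Nat.cast_ne_zero.mpr (by omega))
  rw [eq_div_iff hb01]
  refine mul_right_cancel₀ hP2q ?_
  have q1 : ({v | Γ.G.dist x v = j + 2 ∧ Γ.G.dist w v = j + 1}.ncard : ℚ)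
      * ((((∏ t ∈ Finset.range j, Γ.c (t+1) : ℕ)) : ℚ) * (Γ.c (j+1) : ℚ))
      = (((∏ t ∈ Finset.range j, Γ.b (t+2) : ℕ)) : ℚ) * (Γ.b 1 : ℚ) := by exact_mod_cast n1
  have q2 : ({v | Γ.G.dist x v = j + 2 ∧ Γ.G.dist y v = j}.ncard : ℚ)
      * (((∏ t ∈ Finset.range j, Γ.c (t+1) : ℕ)) : ℚ)
      = (((∏ t ∈ Finset.range j, Γ.b (t+2) : ℕ)) : ℚ) := by exact_mod_cast n2
  have q3 : ({v | Γ.G.dist x v = j + 2}.ncard : ℚ)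
      * (((((∏ t ∈ Finset.range j, Γ.c (t+1) : ℕ)) : ℚ) * (Γ.c (j+1) : ℚ)) * (Γ.c (j+2) : ℚ))
      = (((((∏ t ∈ Finset.range j, Γ.b (t+2) : ℕ)) : ℚ) * (Γ.b 1 : ℚ)) * (Γ.b 0 : ℚ)) := by
    exact_mod_cast n3
  have q4 : (Γ.c (j+1) : ℚ) + (Γ.b (j+1) : ℚ) = 1 + (Γ.b 1 : ℚ) := by exact_mod_cast n4
  have q5 : ({v | Γ.G.dist x v = j + 2 ∧ Γ.G.dist w v = j + 1}.ncard : ℚ)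
      = ({v | Γ.G.dist x v = j + 2 ∧ Γ.G.dist y v = j}.ncard : ℚ)
        + ({v | Γ.G.dist x v = j + 2 ∧ Γ.G.dist y v = j + 2
            ∧ Γ.G.dist w v = j + 1}.ncard : ℚ) := by exact_mod_cast n5
  linear_combination ((Γ.b 0:ℚ)*(Γ.b 1:ℚ))*q1
    - ((Γ.b 0:ℚ)*(Γ.b 1:ℚ)*(Γ.c (j+1):ℚ))*q2
    - ((Γ.b (j+1):ℚ)-1)*q3
    - ((Γ.b 0:ℚ)*(Γ.b 1:ℚ)*(((∏ t ∈ Finset.range j, Γ.b (t+2) : ℕ)):ℚ))*q4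
    - ((Γ.b 0:ℚ)*(Γ.b 1:ℚ)*(((∏ t ∈ Finset.range j, Γ.c (t+1) : ℕ)):ℚ)*(Γ.c (j+1):ℚ))*q5
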